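/- Let p be a prime, s ∈ ℤ_{≥1}, a ∈ ℤ_p ∖ ℤ_{≤0}. Denote by B°_k the coefficients B_k taken with c = 1 (so B°_k = (k+a)^{−1}(A_k − (−1)^{se} A^{(1)}_{(k−l)/p})). If the function k ↦ B°_k/A_k on ℤ_{≥0} is Lipschitz, then for every c ∈ 1+qW the function k ↦ B_k/A_k is Lipschitz. -/

import Mathlib

open scoped Classical

namespace HGP

/-- `𝔽̄_p`, an algebraic closure of the prime field `𝔽_p`. -/
abbrev Fbar (p : ℕ) [Fact p.Prime] : Type _ := AlgebraicClosure (ZMod p)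

/-- `W = W(𝔽̄_p)`, the ring of Witt vectors of `𝔽̄_p`. -/
abbrev Wp (p : ℕ) [Fact p.Prime] : Type _ := WittVector p (Fbar p)

/-- `K = Frac W`. -/
abbrev Kp (p : ℕ) [Fact p.Prime] : Type _ := FractionRing (Wp p)

/-- The canonical embedding `ℤ_p = W(𝔽_p) → W(𝔽̄_p)`. -/
noncomputable def iota (p : ℕ) [Fact p.Prime] : ℤ_[p] →+* Wp p :=
  (WittVector.map (algebraMap (ZMod p) (Fbar p))).comp (WittVector.equiv p).symm.toRingHom

/-- The canonical embedding `W → K`. -/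
noncomputable def iotaK (p : ℕ) [Fact p.Prime] : Wp p →+* Kp p := algebraMap (Wp p) (Kp p)

/-- `l`: the unique integer in `{0,…,p−1}` with `a + l ≡ 0 mod p`. -/
noncomputable def dl (p : ℕ) [Fact p.Prime] (a : ℤ_[p]) : ℕ := (-a).appr 1

/-- `q := 4` if `p = 2` and `q := p` otherwise. -/
def qq (p : ℕ) : ℕ := if p = 2 then 4 else p

/-- `l′`: the unique integer in `{0,…,q−1}` with `a + l′ ≡ 0 mod q`. -/
noncomputable def dl' (p : ℕ) [Fact p.Prime] (a : ℤ_[p]) : ℕ :=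
  (-a).appr (if p = 2 then 2 else 1)

/-- `e := l′ − ⌊l′/p⌋`. -/
noncomputable def de (p : ℕ) [Fact p.Prime] (a : ℤ_[p]) : ℕ := dl' p a - dl' p a / p

/-- `a ∈ ℤ_p ∖ ℤ_{≤0}`, i.e. `a` is not a nonpositive rational integer. -/
def NotNonposInt (p : ℕ) [Fact p.Prime] (a : ℤ_[p]) : Prop := ∀ n : ℕ, a + (n : ℤ_[p]) ≠ 0

/-- `a′` is the Dwork prime of `a`, i.e. `p·a′ = a + l`. -/
def IsDworkPrime (p : ℕ) [Fact p.Prime] (a a' : ℤ_[p]) : Prop :=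
  (p : ℤ_[p]) * a' = a + (dl p a : ℤ_[p])

/-- `A k = ((a)_k / k!)^s ∈ ℤ_p`, characterized by `k!^s · A k = ((a)_k)^s`. -/
def IsHGCoeff (p : ℕ) [Fact p.Prime] (s : ℕ) (a : ℤ_[p]) (A : ℕ → ℤ_[p]) : Prop :=
  ∀ k : ℕ, (k.factorial : ℤ_[p]) ^ s * A k = ((ascPochhammer ℤ_[p] k).eval a) ^ s

/-- `f = (α ↦ c^α)` for `c ∈ 1 + pW`: `c^α` is uniquely characterized by
`c^α ≡ c^{α_n} mod p^n W` for any natural approximation `α_n` of `α` mod `p^n`. -/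
def IsCpow (p : ℕ) [Fact p.Prime] (c : Wp p) (f : ℤ_[p] → Wp p) : Prop :=
  ∀ (α : ℤ_[p]) (n : ℕ), f α - c ^ (α.appr n) ∈ Ideal.span {(p : Wp p) ^ n}

/-- The coefficients `B_k` of `Ĝ^{(σ)}_{a,…,a}(t)`, as elements of `K = Frac W`:
`B_k = (k+a)⁻¹ (A_k − (−1)^{se} A^{(1)}_{(k−l)/p} c^{(k−l)/p + a′})`. -/
noncomputable def BhatK (p : ℕ) [Fact p.Prime] (s : ℕ) (a a' : ℤ_[p]) (A A1 : ℕ → ℤ_[p])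
    (cpw : ℤ_[p] → Wp p) (k : ℕ) : Kp p :=
  ((k : Kp p) + iotaK p (iota p a))⁻¹ *
    (iotaK p (iota p (A k)) -
      (if dl p a ≤ k ∧ p ∣ (k - dl p a) then
        (-1 : Kp p) ^ (s * de p a) * iotaK p (iota p (A1 ((k - dl p a) / p))) *
          iotaK p (cpw ((((k - dl p a) / p : ℕ) : ℤ_[p]) + a'))
      else 0))

/-- `B : ℕ → W` is the coefficient function of `Ĝ^{(σ)}_{a,…,a}(t)`, characterized in `W` by
`(k+a)·B_k = A_k − (−1)^{se} A^{(1)}_{(k−l)/p} c^{(k−l)/p + a′}`. -/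
def IsBhat (p : ℕ) [Fact p.Prime] (s : ℕ) (a a' : ℤ_[p]) (A A1 : ℕ → ℤ_[p])
    (cpw : ℤ_[p] → Wp p) (B : ℕ → Wp p) : Prop :=
  ∀ k : ℕ, ((k : Wp p) + iota p a) * B k =
    iota p (A k) -
      (if dl p a ≤ k ∧ p ∣ (k - dl p a) then
        (-1 : Wp p) ^ (s * de p a) * iota p (A1 ((k - dl p a) / p)) *
          cpw ((((k - dl p a) / p : ℕ) : ℤ_[p]) + a')
      else 0)

/-- A function `ℕ → K` is Lipschitz: it takes values in `W` and
`p^m ∣ (n − n′)` implies `f n − f n′ ∈ p^m W`. -/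
def LipschitzSeq (p : ℕ) [Fact p.Prime] (f : ℕ → Kp p) : Prop :=
  (∀ n : ℕ, f n ∈ (iotaK p).range) ∧
    ∀ n n' m : ℕ, ((p : ℤ) ^ m ∣ (n : ℤ) - (n' : ℤ)) →
      ∃ w : Wp p, f n - f n' = (p : Kp p) ^ m * iotaK p w

/-- `L` is the `p`-adic limit of the sequence `s` in `W`. -/
def WLim (p : ℕ) [Fact p.Prime] (s : ℕ → Wp p) (L : Wp p) : Prop :=
  ∀ m : ℕ, ∃ M : ℕ, ∀ n ≥ M, L - s n ∈ Ideal.span {(p : Wp p) ^ m}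

/-- `{α}_k := Π_{1 ≤ i ≤ k, p ∤ (α+i−1)} (α+i−1)`. -/
noncomputable def curly (p : ℕ) [Fact p.Prime] (α : ℤ_[p]) (k : ℕ) : ℤ_[p] :=
  ∏ j ∈ Finset.range k, if (p : ℤ_[p]) ∣ (α + (j : ℤ_[p])) then 1 else (α + (j : ℤ_[p]))

/-- `W/p^n W`. -/
abbrev Qn (p : ℕ) [Fact p.Prime] (n : ℕ) := Wp p ⧸ Ideal.span {(p : Wp p) ^ n}

/-- Laurent polynomials over `W/p^n`, obtained from polynomials over `W`. -/
noncomputable def laurentOfPolyW (p : ℕ) [Fact p.Prime] (n : ℕ) :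
    Polynomial (Wp p) →+* LaurentPolynomial (Qn p n) :=
  (Polynomial.toLaurent).comp
    (Polynomial.mapRingHom (Ideal.Quotient.mk (Ideal.span {(p : Wp p) ^ n})))

/-- `R_n := (W/p^n)[t,t⁻¹, h(t)⁻¹]`, the localization of the Laurent polynomial ring
over `W/p^n` away from (the image of) `h`. -/
abbrev Rn (p : ℕ) [Fact p.Prime] (h : Polynomial (Wp p)) (n : ℕ) :=
  Localization.Away (laurentOfPolyW p n h)

/-- The canonical map from Laurent polynomials over `W/p^n` to `R_n`. -/
noncomputable def mkRn (p : ℕ) [Fact p.Prime] (h : Polynomial (Wp p)) (n : ℕ) :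
    LaurentPolynomial (Qn p n) →+* Rn p h n := algebraMap _ _

/-- The canonical map from polynomials over `W` to `R_n`. -/
noncomputable def toRn (p : ℕ) [Fact p.Prime] (h : Polynomial (Wp p)) (n : ℕ) :
    Polynomial (Wp p) →+* Rn p h n := (mkRn p h n).comp (laurentOfPolyW p n)



set_option linter.unusedSectionVars false
set_option linter.unusedVariables false
set_option maxHeartbeats 2000000
set_option synthInstance.maxHeartbeats 2000000

namespace HGPAux
variable {p : ℕ} [hp : Fact p.Prime]
variable {p : ℕ} [hp : Fact p.Prime]

lemma digitsum_pos {i : ℕ} (hi : 1 ≤ i) : 1 ≤ (Nat.digits p i).sum := by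
  have hne : Nat.digits p i ≠ [] := Nat.digits_ne_nil_iff_ne_zero.mpr (by omega)
  have hlast := Nat.getLast_digit_ne_zero p (m := i) (by omega)
  have hmem := List.getLast_mem hne
  have := List.single_le_sum (fun x (_ : x ∈ Nat.digits p i) => Nat.zero_le x) _ hmem
  omega

lemma vfac_le_sub_one {i : ℕ} (hi : 1 ≤ i) : padicValNat p (Nat.factorial i) ≤ i - 1 := by
  have h := sub_one_mul_padicValNat_factorial (p := p) i
  have hds := digitsum_pos (p := p) hi
  have hp2 : 2 ≤ p := hp.out.two_le
  have hle : padicValNat p (Nat.factorial i) ≤ (p - 1) * padicValNat p (Nat.factorial i) :=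
    Nat.le_mul_of_pos_left _ (by omega)
  omega

lemma vfac_le_sub_two (hodd : p ≠ 2) {i : ℕ} (hi : 2 ≤ i) :
    padicValNat p (Nat.factorial i) ≤ i - 2 := by
  have h := sub_one_mul_padicValNat_factorial (p := p) i
  have hds := digitsum_pos (p := p) (by omega : 1 ≤ i)
  have hp3 : 3 ≤ p := by
    have h2 := hp.out.two_le
    rcases Nat.lt_or_ge p 3 with h' | h' <;> omega
  have hle : 2 * padicValNat p (Nat.factorial i) ≤ (p - 1) * padicValNat p (Nat.factorial i) :=
    Nat.mul_le_mul_right _ (by omega)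
  omega

lemma int_dvd_of_dvd_mul {T : ℤ} {a m : ℕ} (hm : m ≠ 0)
    (h : (p : ℤ) ^ a ∣ (m : ℤ) * T) :
    (p : ℤ) ^ (a - padicValNat p m) ∣ T := by
  set v := padicValNat p m with hv
  rcases Nat.le_total a v with hav | hav
  · rw [Nat.sub_eq_zero_of_le hav, pow_zero]; exact one_dvd _
  have hfac : m.factorization p = v := Nat.factorization_def m hp.out
  have hm' : m = p ^ v * (m / p ^ v) := by
    rw [← hfac]; exact (Nat.ordProj_mul_ordCompl_eq_self m p).symm
  set m0 := m / p ^ v with hm0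
  have hndvd : ¬ p ∣ m0 := by
    rw [hm0, ← hfac]; exact Nat.not_dvd_ordCompl hp.out hm
  have hsplit : (m : ℤ) * T = (p : ℤ) ^ v * ((m0 : ℤ) * T) := by
    rw [hm']; push_cast; ring
  rw [hsplit] at h
  have hpow : (p : ℤ) ^ a = (p : ℤ) ^ v * (p : ℤ) ^ (a - v) := by
    rw [← pow_add]; congr 1; omega
  rw [hpow] at h
  have hpne : ((p : ℤ) ^ v) ≠ 0 := by
    have := hp.out.pos
    exact pow_ne_zero _ (by exact_mod_cast Nat.pos_iff_ne_zero.mp this)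
  have h2 : (p : ℤ) ^ (a - v) ∣ (m0 : ℤ) * T := (mul_dvd_mul_iff_left hpne).mp h
  have hcop : IsCoprime ((p : ℤ) ^ (a - v)) (m0 : ℤ) := by
    apply IsCoprime.pow_left
    rw [Int.isCoprime_iff_gcd_eq_one, Int.gcd_natCast_natCast]
    exact (Nat.Prime.coprime_iff_not_dvd hp.out).mpr hndvd
  exact hcop.dvd_of_dvd_mul_left h2

variable {p : ℕ} [hp : Fact p.Prime]

lemma choose_int_dvd {N j d : ℕ} (hj : 1 ≤ j) (hjN : j ≤ N)
    (hN : (p : ℤ) ^ d ∣ (N : ℤ)) :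
    (p : ℤ) ^ (d - padicValNat p j.factorial) ∣ (N.choose j : ℤ) := by
  apply int_dvd_of_dvd_mul (Nat.factorial_ne_zero j)
  obtain ⟨N₀, rfl⟩ : ∃ N₀, N = N₀ + 1 := ⟨N - 1, by omega⟩
  obtain ⟨j₀, rfl⟩ : ∃ j₀, j = j₀ + 1 := ⟨j - 1, by omega⟩
  have hid : (j₀+1).factorial * (N₀+1).choose (j₀+1) = (N₀+1) * N₀.descFactorial j₀ := by
    rw [← Nat.descFactorial_eq_factorial_mul_choose, Nat.succ_descFactorial_succ]
  have : ((j₀+1).factorial : ℤ) * ((N₀+1).choose (j₀+1) : ℤ)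
      = ((N₀+1) : ℤ) * (N₀.descFactorial j₀ : ℤ) := by exact_mod_cast congrArg (Nat.cast : ℕ → ℤ) hid
  rw [this]
  exact Dvd.dvd.mul_right hN _

variable {R : Type*} [CommRing R]

lemma one_add_pow_expand (x : R) (N : ℕ) :
    (1 + x) ^ N - 1 = ∑ i ∈ Finset.range N, x ^ (i+1) * ((N.choose (i+1) : R)) := by
  rw [add_comm 1 x, add_pow]
  rw [Finset.sum_range_succ']
  simp

lemma int_cast_pow_dvd {e : ℕ} {T : ℤ} (h : (p : ℤ) ^ e ∣ T) : (p : R) ^ e ∣ (T : R) := by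
  have := map_dvd (Int.castRingHom R) h
  simpa using this

lemma geom_pow_sub_one (u : R) (vq : ℕ) (hvq : 1 ≤ vq) {N d : ℕ}
    (hN : (p : ℤ) ^ d ∣ (N : ℤ)) :
    (p : R) ^ (d + vq) ∣ (1 + (p : R) ^ vq * u) ^ N - 1 := by
  rw [one_add_pow_expand]
  apply Finset.dvd_sum
  intro i hi
  have hiN : i + 1 ≤ N := Finset.mem_range.mp hi
  have hV := vfac_le_sub_one (p := p) (i := i + 1) (by omega)
  have hfc := choose_int_dvd (p := p) (j := i+1) (by omega) hiN hN
  have hc : (p : R) ^ (d - padicValNat p (i+1).factorial) ∣ ((N.choose (i+1) : ℕ) : R) := by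
    have := int_cast_pow_dvd (R := R) hfc; simpa using this
  have hx : ((p : R) ^ vq * u) ^ (i+1) = (p : R) ^ (vq * (i+1)) * u ^ (i+1) := by
    rw [mul_pow, ← pow_mul]
  rw [hx]
  have hi1 : i * 1 ≤ i * vq := Nat.mul_le_mul_left _ hvq
  have hee : d + vq ≤ (d - padicValNat p (i+1).factorial) + vq * (i+1) := by
    have : vq * (i+1) = i * vq + vq := by ring
    simp only [Nat.succ_sub_one] at hV
    omega
  calc (p : R) ^ (d + vq) ∣ (p : R) ^ ((d - padicValNat p (i+1).factorial) + vq * (i+1)) :=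
        pow_dvd_pow _ hee
    _ = (p : R) ^ (d - padicValNat p (i+1).factorial) * (p : R) ^ (vq * (i+1)) := pow_add _ _ _
    _ ∣ ((N.choose (i+1) : R)) * ((p : R) ^ (vq * (i+1)) * u ^ (i+1)) := by
        apply mul_dvd_mul hc
        exact Dvd.dvd.mul_right dvd_rfl _
    _ = (p : R) ^ (vq * (i+1)) * u ^ (i+1) * ((N.choose (i+1) : R)) := by ring

variable {p : ℕ} [hp : Fact p.Prime]

lemma expand_to (x : R) {N L : ℕ} (hNL : N ≤ L) :
    (1 + x) ^ N - 1 = ∑ i ∈ Finset.range L, x ^ (i+1) * ((N.choose (i+1) : R)) := by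
  rw [one_add_pow_expand]
  apply Finset.sum_subset (Finset.range_subset_range.mpr hNL)
  intro i _ hiN
  have : N < i + 1 := by
    have := Finset.mem_range.not.mp hiN; omega
  rw [Nat.choose_eq_zero_of_lt this]; simp

lemma main_int_bound (u : R) (vq e2 : ℕ)
    (hkey : ∀ i, 2 ≤ i → padicValNat p i.factorial + (2 + e2) ≤ i * vq)
    {N N' d d' r : ℕ} (hN1 : 1 ≤ N) (hN'1 : 1 ≤ N')
    (hdN : (p : ℤ) ^ d ∣ (N : ℤ)) (hdN' : (p : ℤ) ^ d' ∣ (N' : ℤ))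
    (hr : (p : ℤ) ^ r ∣ (N : ℤ) - (N' : ℤ)) :
    (p : R) ^ (d + d' + r + (2 + e2)) ∣
      (N' : R) * ((1 + (p : R) ^ vq * u) ^ N - 1) -
        (N : R) * ((1 + (p : R) ^ vq * u) ^ N' - 1) := by
  set x : R := (p : R) ^ vq * u with hxdef
  rw [expand_to x (Nat.le_add_right N N'), expand_to x (Nat.le_add_left N' N),
    Finset.mul_sum, Finset.mul_sum, ← Finset.sum_sub_distrib]
  apply Finset.dvd_sum
  intro i _
  have hterm : (N' : R) * (x ^ (i+1) * (N.choose (i+1) : R)) -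
      (N : R) * (x ^ (i+1) * (N'.choose (i+1) : R)) =
      x ^ (i+1) * ((((N' : ℤ) * (N.choose (i+1) : ℤ) - (N : ℤ) * (N'.choose (i+1) : ℤ)) : ℤ) : R) := by
    push_cast; ring
  rw [hterm]
  rcases Nat.eq_zero_or_pos i with rfl | hi
  · have : ((N' : ℤ) * (N.choose 1 : ℤ) - (N : ℤ) * (N'.choose 1 : ℤ)) = 0 := by
      rw [Nat.choose_one_right, Nat.choose_one_right]; ring
    rw [this]; simp
  · set j := i + 1 with hjdef
    have hj2 : 2 ≤ j := by omega
    set T : ℤ := (N' : ℤ) * (N.choose j : ℤ) - (N : ℤ) * (N'.choose j : ℤ) with hTdef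
    -- factorial identity
    have hNat : ∀ M : ℕ, 1 ≤ M → j.factorial * M.choose j = M * ((M-1).descFactorial (j-1)) := by
      intro M hM
      obtain ⟨M₀, rfl⟩ : ∃ M₀, M = M₀ + 1 := ⟨M - 1, by omega⟩
      obtain ⟨j₀, hj₀⟩ : ∃ j₀, j = j₀ + 1 := ⟨j - 1, by omega⟩
      rw [hj₀]
      simp only [Nat.add_sub_cancel]
      rw [← Nat.descFactorial_eq_factorial_mul_choose, Nat.succ_descFactorial_succ]
    have hfacT : (j.factorial : ℤ) * T = (N : ℤ) * (N' : ℤ) *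
        (((N-1).descFactorial (j-1) : ℤ) - ((N'-1).descFactorial (j-1) : ℤ)) := by
      have h1 := hNat N hN1
      have h2 := hNat N' hN'1
      have h1' : (j.factorial : ℤ) * (N.choose j : ℤ) = (N : ℤ) * ((N-1).descFactorial (j-1) : ℤ) := by
        exact_mod_cast congrArg (Nat.cast : ℕ → ℤ) h1
      have h2' : (j.factorial : ℤ) * (N'.choose j : ℤ) = (N' : ℤ) * ((N'-1).descFactorial (j-1) : ℤ) := by
        exact_mod_cast congrArg (Nat.cast : ℕ → ℤ) h2
      rw [hTdef]
      linear_combination (N' : ℤ) * h1' - (N : ℤ) * h2'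
    have hΔ : (p : ℤ) ^ r ∣ ((N-1).descFactorial (j-1) : ℤ) - ((N'-1).descFactorial (j-1) : ℤ) := by
      have heval := Polynomial.sub_dvd_eval_sub (((N-1 : ℕ) : ℤ)) (((N'-1 : ℕ) : ℤ))
        (descPochhammer ℤ (j-1))
      rw [descPochhammer_eval_eq_descFactorial, descPochhammer_eval_eq_descFactorial] at heval
      refine dvd_trans ?_ heval
      have : ((N-1 : ℕ) : ℤ) - ((N'-1 : ℕ) : ℤ) = (N : ℤ) - (N' : ℤ) := by
        rw [Nat.cast_sub hN1, Nat.cast_sub hN'1]; ring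
      rw [this]; exact hr
    have hT : (p : ℤ) ^ (d + d' + r - padicValNat p j.factorial) ∣ T := by
      apply int_dvd_of_dvd_mul (Nat.factorial_ne_zero j)
      rw [hfacT, pow_add, pow_add]
      exact mul_dvd_mul (mul_dvd_mul hdN hdN') hΔ
    have hTR : (p : R) ^ (d + d' + r - padicValNat p j.factorial) ∣ ((T : ℤ) : R) :=
      int_cast_pow_dvd hT
    have hx : x ^ j = (p : R) ^ (vq * j) * u ^ j := by
      rw [hxdef, mul_pow, ← pow_mul]
    rw [hx]
    have hkj := hkey j hj2
    have hee : d + d' + r + (2 + e2) ≤ (d + d' + r - padicValNat p j.factorial) + vq * j := by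
      have : vq * j = j * vq := Nat.mul_comm _ _
      omega
    calc (p : R) ^ (d + d' + r + (2 + e2)) ∣
        (p : R) ^ ((d + d' + r - padicValNat p j.factorial) + vq * j) := pow_dvd_pow _ hee
      _ = (p : R) ^ (vq * j) * (p : R) ^ (d + d' + r - padicValNat p j.factorial) := by
          rw [← pow_add]; ring_nf
      _ ∣ (p : R) ^ (vq * j) * u ^ j * ((T : ℤ) : R) := by
          rcases hTR with ⟨w, hw⟩
          exact ⟨u ^ j * w, by rw [hw]; ring⟩
  done

end HGPAux

section Bridges
open HGPAux
variable {p : ℕ} [hp : Fact p.Prime]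

lemma padic_unit_decomp {β : ℤ_[p]} (hβ : β ≠ 0) :
    ∃ (d : ℕ) (μ : ℤ_[p]ˣ), β = (p : ℤ_[p]) ^ d * μ :=
  ⟨β.valuation, PadicInt.unitCoeff hβ,
    (PadicInt.unitCoeff_spec hβ).trans (mul_comm _ _)⟩

lemma appr_dvd_sub (β : ℤ_[p]) (n : ℕ) : (p : ℤ_[p]) ^ n ∣ β - (β.appr n : ℤ_[p]) :=
  Ideal.mem_span_singleton.mp (PadicInt.appr_spec n β)

lemma appr_nat_dvd {β : ℤ_[p]} {d n : ℕ} (hd : (p : ℤ_[p]) ^ d ∣ β) (hdn : d ≤ n) :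
    (p : ℤ) ^ d ∣ ((β.appr n : ℕ) : ℤ) := by
  have h3 : (p : ℤ_[p]) ^ d ∣ β - β.appr n := dvd_trans (pow_dvd_pow _ hdn) (appr_dvd_sub β n)
  have h1 : (p : ℤ_[p]) ^ d ∣ ((β.appr n : ℕ) : ℤ_[p]) := by
    have := dvd_sub hd h3; simpa using this
  have h2 := (PadicInt.pow_p_dvd_int_iff d ((β.appr n : ℕ) : ℤ)).mp (by exact_mod_cast h1)
  exact_mod_cast h2

lemma appr_sub_nat_dvd {β β' : ℤ_[p]} {r n : ℕ} (hr : (p : ℤ_[p]) ^ r ∣ β - β') (hrn : r ≤ n) :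
    (p : ℤ) ^ r ∣ ((β.appr n : ℕ) : ℤ) - ((β'.appr n : ℕ) : ℤ) := by
  have h1 : (p : ℤ_[p]) ^ r ∣ β - β.appr n := dvd_trans (pow_dvd_pow _ hrn) (appr_dvd_sub β n)
  have h2 : (p : ℤ_[p]) ^ r ∣ β' - β'.appr n := dvd_trans (pow_dvd_pow _ hrn) (appr_dvd_sub β' n)
  have h3 : (p : ℤ_[p]) ^ r ∣ ((β.appr n : ℤ_[p]) - (β'.appr n : ℤ_[p])) := by
    have h12 := dvd_sub h1 h2
    have hEq : ((β.appr n : ℤ_[p]) - (β'.appr n : ℤ_[p]))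
        = (β - β') - ((β - β.appr n) - (β' - β'.appr n)) := by ring
    rw [hEq]
    exact dvd_sub hr h12
  have h4 : (p : ℤ_[p]) ^ r ∣ ((((β.appr n : ℕ) : ℤ) - ((β'.appr n : ℕ) : ℤ) : ℤ) : ℤ_[p]) := by
    push_cast; push_cast at h3; exact h3
  have h5 := (PadicInt.pow_p_dvd_int_iff r _).mp (by exact_mod_cast h4)
  exact_mod_cast h5

lemma appr_pos {β : ℤ_[p]} {d : ℕ} (μ : ℤ_[p]ˣ) (hβd : β = (p : ℤ_[p]) ^ d * μ) {n : ℕ}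
    (hn : d + 1 ≤ n) : 1 ≤ β.appr n := by
  by_contra h
  have h0 : β.appr n = 0 := by omega
  have h1 : (p : ℤ_[p]) ^ n ∣ β := by
    have := appr_dvd_sub β n; rw [h0] at this; simpa using this
  have h2 : (p : ℤ_[p]) ^ (d + 1) ∣ (p : ℤ_[p]) ^ d * μ :=
    hβd ▸ dvd_trans (pow_dvd_pow _ hn) h1
  have hpne : ((p : ℤ_[p]) ^ d) ≠ 0 := pow_ne_zero _ (by exact_mod_cast hp.out.ne_zero)
  have h3 : (p : ℤ_[p]) ∣ (μ : ℤ_[p]) := by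
    rw [pow_succ] at h2
    exact (mul_dvd_mul_iff_left hpne).mp h2
  exact (PadicInt.prime_p).not_unit (isUnit_of_dvd_unit h3 μ.isUnit)

-- iota facts
lemma iota_injective : Function.Injective (iota p) := by
  intro x y hxy
  simp only [iota, RingHom.coe_comp, Function.comp_apply, RingEquiv.toRingHom_eq_coe,
    RingEquiv.coe_toRingHom] at hxy
  have h1 := WittVector.map_injective (algebraMap (ZMod p) (Fbar p))
    (algebraMap (ZMod p) (Fbar p)).injective hxy
  exact (WittVector.equiv p).symm.injective h1

lemma iota_pow_dvd {x : ℤ_[p]} {e : ℕ} (h : (p : ℤ_[p]) ^ e ∣ x) :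
    (p : Wp p) ^ e ∣ iota p x := by
  have := map_dvd (iota p) h
  simpa using this

lemma cpow_sub_pow {c : Wp p} {cpw : ℤ_[p] → Wp p} (hcpw : IsCpow p c cpw) (β : ℤ_[p]) (n : ℕ) :
    (p : Wp p) ^ n ∣ cpw β - c ^ (β.appr n) :=
  Ideal.mem_span_singleton.mp (hcpw β n)

lemma bridgeA (vq : ℕ) (hvq : 1 ≤ vq) (u c : Wp p) (hc : c = 1 + (p : Wp p) ^ vq * u)
    (cpw : ℤ_[p] → Wp p) (hcpw : IsCpow p c cpw) {β : ℤ_[p]} {d : ℕ}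
    (hd : (p : ℤ_[p]) ^ d ∣ β) :
    (p : Wp p) ^ (d + vq) ∣ 1 - cpw β := by
  set n := d + vq with hn
  have h1 := cpow_sub_pow hcpw β n
  have hdN : (p : ℤ) ^ d ∣ ((β.appr n : ℕ) : ℤ) := appr_nat_dvd hd (by omega)
  have h3 : (p : Wp p) ^ (d + vq) ∣ c ^ (β.appr n) - 1 := by
    rw [hc]; exact geom_pow_sub_one u vq hvq hdN
  have hiden : 1 - cpw β = -(cpw β - c ^ (β.appr n)) - (c ^ (β.appr n) - 1) := by ring
  rw [hiden]
  exact dvd_sub (dvd_neg.mpr h1) h3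

lemma bridgeB (vq : ℕ) (hvq : 1 ≤ vq) (u c : Wp p) (hc : c = 1 + (p : Wp p) ^ vq * u)
    (cpw : ℤ_[p] → Wp p) (hcpw : IsCpow p c cpw) {β β' : ℤ_[p]} {r : ℕ}
    (hr : (p : ℤ_[p]) ^ r ∣ β - β') :
    (p : Wp p) ^ (r + vq) ∣ cpw β - cpw β' := by
  set n := r + vq with hn
  set N := β.appr n with hN
  set N' := β'.appr n with hN'
  have h1 := cpow_sub_pow hcpw β n
  have h2 := cpow_sub_pow hcpw β' n
  have hNN' : (p : ℤ) ^ r ∣ (N : ℤ) - (N' : ℤ) := appr_sub_nat_dvd hr (by omega)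
  have hkey : (p : Wp p) ^ n ∣ c ^ N - c ^ N' := by
    rcases le_total N' N with hle | hle
    · have hΔ : (p : ℤ) ^ r ∣ ((N - N' : ℕ) : ℤ) := by
        rw [Nat.cast_sub hle]; exact hNN'
      have hg := geom_pow_sub_one (p := p) (R := Wp p) u vq hvq hΔ
      rw [← hc] at hg
      have hcN : c ^ N - c ^ N' = c ^ N' * (c ^ (N - N') - 1) := by
        rw [mul_sub, mul_one, ← pow_add]; congr 2; omega
      rw [hcN, hn]
      exact Dvd.dvd.mul_left hg _
    · have hΔ : (p : ℤ) ^ r ∣ ((N' - N : ℕ) : ℤ) := by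
        rw [Nat.cast_sub hle]
        simpa [neg_sub] using dvd_neg.mpr hNN'
      have hg := geom_pow_sub_one (p := p) (R := Wp p) u vq hvq hΔ
      rw [← hc] at hg
      have hcN : c ^ N - c ^ N' = -(c ^ N * (c ^ (N' - N) - 1)) := by
        rw [mul_sub, mul_one, ← pow_add]
        rw [show N + (N' - N) = N' by omega]
        ring
      rw [hcN, hn]
      exact dvd_neg.mpr (Dvd.dvd.mul_left hg _)
  have hiden : cpw β - cpw β' = (cpw β - c ^ N) - (cpw β' - c ^ N') + (c ^ N - c ^ N') := by ring
  rw [hiden]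
  exact dvd_add (dvd_sub h1 h2) hkey


lemma bridgeC (vq e2 : ℕ) (hvq : vq = 1 + e2)
    (hkey : ∀ i, 2 ≤ i → padicValNat p i.factorial + (2 + e2) ≤ i * vq)
    (u c : Wp p) (hc : c = 1 + (p : Wp p) ^ vq * u)
    (cpw : ℤ_[p] → Wp p) (hcpw : IsCpow p c cpw) {β β' : ℤ_[p]}
    (hβ : β ≠ 0) (hβ' : β' ≠ 0) {r : ℕ} (hr : (p : ℤ_[p]) ^ r ∣ β - β') :
    ∃ y : Wp p, iota p β' * (cpw β - 1) - iota p β * (cpw β' - 1)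
      = (p : Wp p) ^ (r + 2 + e2) * iota p β * iota p β' * y := by
  obtain ⟨d, μ, hβd⟩ := padic_unit_decomp hβ
  obtain ⟨d', μ', hβd'⟩ := padic_unit_decomp hβ'
  set M := d + d' + r + (2 + e2) with hM
  set n := M with hn
  set N := β.appr n with hNdef
  set N' := β'.appr n with hN'def
  have hN1 : 1 ≤ N := appr_pos μ hβd (by omega)
  have hN'1 : 1 ≤ N' := appr_pos μ' hβd' (by omega)
  have hdN : (p : ℤ) ^ d ∣ (N : ℤ) := appr_nat_dvd ⟨(μ : ℤ_[p]), hβd⟩ (by omega)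
  have hdN' : (p : ℤ) ^ d' ∣ (N' : ℤ) := appr_nat_dvd ⟨(μ' : ℤ_[p]), hβd'⟩ (by omega)
  have hrN : (p : ℤ) ^ r ∣ (N : ℤ) - (N' : ℤ) := appr_sub_nat_dvd hr (by omega)
  have hmain := main_int_bound (p := p) (R := Wp p) u vq e2 hkey hN1 hN'1 hdN hdN' hrN
  rw [← hc, ← hM] at hmain
  -- approximation step
  have ha1 : (p : Wp p) ^ M ∣ iota p β' * (cpw β - c ^ N) :=
    Dvd.dvd.mul_left (cpow_sub_pow hcpw β n) _
  have ha2 : (p : Wp p) ^ M ∣ iota p β * (cpw β' - c ^ N') :=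
    Dvd.dvd.mul_left (cpow_sub_pow hcpw β' n) _
  have ha3 : (p : Wp p) ^ M ∣ (iota p β' - (N' : Wp p)) * (c ^ N - 1) := by
    have : iota p β' - (N' : Wp p) = iota p (β' - (N' : ℤ_[p])) := by
      rw [map_sub, map_natCast]
    rw [this]
    exact Dvd.dvd.mul_right (iota_pow_dvd (appr_dvd_sub β' n)) _
  have ha4 : (p : Wp p) ^ M ∣ (iota p β - (N : Wp p)) * (c ^ N' - 1) := by
    have : iota p β - (N : Wp p) = iota p (β - (N : ℤ_[p])) := by
      rw [map_sub, map_natCast]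
    rw [this]
    exact Dvd.dvd.mul_right (iota_pow_dvd (appr_dvd_sub β n)) _
  have hX : (p : Wp p) ^ M ∣ iota p β' * (cpw β - 1) - iota p β * (cpw β' - 1) := by
    have hEq : iota p β' * (cpw β - 1) - iota p β * (cpw β' - 1)
        = ((N' : Wp p) * (c ^ N - 1) - (N : Wp p) * (c ^ N' - 1))
          + (iota p β' * (cpw β - c ^ N) - iota p β * (cpw β' - c ^ N'))
          + ((iota p β' - (N' : Wp p)) * (c ^ N - 1) - (iota p β - (N : Wp p)) * (c ^ N' - 1)) := by
      ring
    rw [hEq]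
    exact dvd_add (dvd_add hmain (dvd_sub ha1 ha2)) (dvd_sub ha3 ha4)
  obtain ⟨w, hw⟩ := hX
  have hμu : IsUnit (iota p (μ : ℤ_[p]) * iota p (μ' : ℤ_[p])) :=
    (μ.isUnit.map (iota p)).mul (μ'.isUnit.map (iota p))
  obtain ⟨ν, hν⟩ := hμu
  refine ⟨((ν⁻¹ : (Wp p)ˣ) : Wp p) * w, ?_⟩
  have hfactor : (p : Wp p) ^ (r + 2 + e2) * iota p β * iota p β'
      = (p : Wp p) ^ M * (ν : Wp p) := by
    rw [hβd, hβd']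
    simp only [map_mul, map_pow, map_natCast]
    rw [hν, show M = (r + 2 + e2) + d + d' by omega, pow_add, pow_add]
    ring
  rw [hw, hfactor]
  have hcancel : ((ν : Wp p) * ((ν⁻¹ : (Wp p)ˣ) : Wp p)) = 1 := ν.mul_inv
  calc (p : Wp p) ^ M * w = (p : Wp p) ^ M * (((ν : Wp p) * ((ν⁻¹ : (Wp p)ˣ) : Wp p)) * w) := by
        rw [hcancel, one_mul]
    _ = (p : Wp p) ^ M * (ν : Wp p) * (((ν⁻¹ : (Wp p)ˣ) : Wp p) * w) := by ring

end Bridges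

/-- if `k ↦ B°_k/A_k` (the case `c = 1`) is Lipschitz, then for every
`c ∈ 1 + qW` the function `k ↦ B_k/A_k` is Lipschitz. -/
theorem statement7 (p : ℕ) [Fact p.Prime] (s : ℕ) (hs : 1 ≤ s)
    (a a' : ℤ_[p]) (ha : NotNonposInt p a) (ha' : IsDworkPrime p a a')
    (A A1 : ℕ → ℤ_[p]) (hA : IsHGCoeff p s a A) (hA1 : IsHGCoeff p s a' A1)
    (hcirc : LipschitzSeq p
      (fun k => BhatK p s a a' A A1 (fun _ => 1) k / iotaK p (iota p (A k)))) :
    ∀ (u c : Wp p), c = 1 + (qq p : Wp p) * u →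
      ∀ cpw : ℤ_[p] → Wp p, IsCpow p c cpw →
        LipschitzSeq p
          (fun k => BhatK p s a a' A A1 cpw k / iotaK p (iota p (A k))) := by
  intro u c hc cpw hcpw
  have hfp : Fact p.Prime := inferInstance
  classical
  set e2 : ℕ := if p = 2 then 1 else 0 with he2
  obtain ⟨u', hcu⟩ : ∃ u' : Wp p, c = 1 + (p : Wp p) ^ (1 + e2) * u' := by
    rcases eq_or_ne p 2 with h2 | h2
    · refine ⟨u, ?_⟩
      rw [hc, he2, if_pos h2]
      subst h2
      norm_num [qq]
    · refine ⟨u, ?_⟩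
      rw [hc, he2, if_neg h2]
      simp [qq, h2]
  have hkeyfac : ∀ i, 2 ≤ i → padicValNat p i.factorial + (2 + e2) ≤ i * (1 + e2) := by
    intro i hi
    rcases eq_or_ne p 2 with h2 | h2
    · have h := HGPAux.vfac_le_sub_one (p := p) (i := i) (by omega)
      rw [he2, if_pos h2]
      have h2i : i * (1 + 1) = i + i := by ring
      omega
    · have h := HGPAux.vfac_le_sub_two (p := p) h2 hi
      rw [he2, if_neg h2]
      have h2i : i * (1 + 0) = i := by ring
      omega
  have hιinj : Function.Injective (iota p) := iota_injective
  have hKinj : Function.Injective (iotaK p) := IsFractionRing.injective _ _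
  have hκZ : ∀ k : ℕ, ((k : ℤ_[p]) + a) ≠ 0 := by
    intro k h
    exact ha k (by rw [add_comm] at h; exact h)
  have hasc : ∀ k : ℕ, (ascPochhammer ℤ_[p] k).eval a ≠ 0 := by
    intro k
    induction k with
    | zero => simp
    | succ n ih =>
      rw [ascPochhammer_succ_eval]
      exact mul_ne_zero ih (ha n)
  have hAne : ∀ k : ℕ, A k ≠ 0 := by
    intro k hk0
    have h1 := hA k
    rw [hk0, mul_zero] at h1
    exact (pow_ne_zero s (hasc k)) h1.symm
  have hlp : dl p a < p := by
    have := PadicInt.appr_lt (-a) 1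
    simpa [dl, pow_one] using this
  have hχiff : ∀ k : ℕ, (dl p a ≤ k ∧ p ∣ (k - dl p a)) ↔ (p : ℤ) ∣ (k : ℤ) - (dl p a : ℤ) := by
    intro k
    constructor
    · rintro ⟨h1, t, ht⟩
      exact ⟨t, by omega⟩
    · intro hdvd
      rcases le_or_gt (dl p a) k with h1 | h1
      · refine ⟨h1, ?_⟩
        have h2 : (p : ℤ) ∣ ((k - dl p a : ℕ) : ℤ) := by
          rw [Nat.cast_sub h1]; exact hdvd
        exact_mod_cast h2
      · exfalso
        have h0 : (k : ℤ) - (dl p a : ℤ) ≠ 0 := by omega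
        have habs : |(k : ℤ) - (dl p a : ℤ)| < (p : ℤ) := by
          rw [abs_lt]; omega
        exact h0 (Int.eq_zero_of_abs_lt_dvd hdvd habs)
  set mkf : ℕ → ℕ := fun k => (k - dl p a) / p with hmkf
  set βf : ℕ → ℤ_[p] := fun k => ((mkf k : ℕ) : ℤ_[p]) + a' with hβf
  have hksplit : ∀ k : ℕ, (dl p a ≤ k ∧ p ∣ (k - dl p a)) → k = dl p a + mkf k * p := by
    rintro k ⟨h1, h2⟩
    have ht : mkf k * p = k - dl p a := Nat.div_mul_cancel h2
    omega
  have hkβ : ∀ k : ℕ, (dl p a ≤ k ∧ p ∣ (k - dl p a)) →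
      ((k : ℤ_[p]) + a) = (p : ℤ_[p]) * βf k := by
    intro k hk
    have h1 := hksplit k hk
    have h2 : ((k : ℕ) : ℤ_[p]) = ((dl p a : ℕ) : ℤ_[p]) + (mkf k : ℤ_[p]) * (p : ℤ_[p]) := by
      conv_lhs => rw [h1]
      push_cast; ring
    have ha'' : (p : ℤ_[p]) * a' = a + (dl p a : ℤ_[p]) := ha'
    rw [h2, hβf]
    simp only
    rw [mul_add, ha'']
    ring
  have hβne : ∀ k, (dl p a ≤ k ∧ p ∣ (k - dl p a)) → βf k ≠ 0 := by
    intro k hk h0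
    have h1 := hkβ k hk
    rw [h0, mul_zero] at h1
    exact hκZ k h1
  obtain ⟨hrange, hlip⟩ := hcirc
  have hrange' : ∀ k : ℕ, ∃ w : Wp p,
      iotaK p w = BhatK p s a a' A A1 (fun _ => 1) k / iotaK p (iota p (A k)) := by
    intro k
    exact (RingHom.mem_range).mp (hrange k)
  choose w0 hw0 using hrange'
  set cw : ℕ → Wp p :=
    fun k => if (dl p a ≤ k ∧ p ∣ (k - dl p a)) then cpw (βf k) else 1 with hcwdef
  have hPne : (p : Wp p) ≠ 0 := (WittVector.irreducible p).ne_zero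
  have hιne : ∀ x : ℤ_[p], x ≠ 0 → iota p x ≠ 0 := by
    intro x hx h0
    exact hx (hιinj (by simpa using h0))
  have htex : ∀ k : ℕ, ∃ t : Wp p, iota p ((k : ℤ_[p]) + a) * t = 1 - cw k := by
    intro k
    by_cases hk : (dl p a ≤ k ∧ p ∣ (k - dl p a))
    · obtain ⟨d, μ, hβd⟩ := padic_unit_decomp (hβne k hk)
      have hdvd1 : (p : Wp p) ^ (d + (1 + e2)) ∣ 1 - cpw (βf k) :=
        bridgeA (1 + e2) (by omega) u' c hcu cpw hcpw ⟨(μ : ℤ_[p]), hβd⟩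
      have hιka : iota p ((k : ℤ_[p]) + a) = (p : Wp p) ^ (d + 1) * iota p (μ : ℤ_[p]) := by
        rw [hkβ k hk, hβd]
        simp only [map_mul, map_pow, map_natCast]
        rw [pow_succ]
        ring
      obtain ⟨w, hw⟩ := hdvd1
      obtain ⟨ν, hν⟩ : IsUnit (iota p (μ : ℤ_[p])) := μ.isUnit.map (iota p)
      refine ⟨((ν⁻¹ : (Wp p)ˣ) : Wp p) * ((p : Wp p) ^ e2 * w), ?_⟩
      rw [hcwdef]
      simp only [if_pos hk]
      rw [hw, hιka, ← hν]
      have hν1 : (ν : Wp p) * ((ν⁻¹ : (Wp p)ˣ) : Wp p) = 1 := ν.mul_inv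
      calc (p : Wp p) ^ (d + 1) * (ν : Wp p) *
            (((ν⁻¹ : (Wp p)ˣ) : Wp p) * ((p : Wp p) ^ e2 * w))
          = ((p : Wp p) ^ (d + 1) * (p : Wp p) ^ e2) *
              ((ν : Wp p) * ((ν⁻¹ : (Wp p)ˣ) : Wp p)) * w := by ring
        _ = (p : Wp p) ^ (d + (1 + e2)) * w := by
            rw [hν1, mul_one, ← pow_add, show d + 1 + e2 = d + (1 + e2) by omega]
    · refine ⟨0, ?_⟩
      rw [hcwdef]
      simp only [if_neg hk]
      simp
  choose tw htw using htex
  have hmain : ∀ k : ℕ, BhatK p s a a' A A1 cpw k / iotaK p (iota p (A k))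
      = iotaK p (cw k * w0 k + tw k) := by
    intro k
    have hw0k := hw0 k
    have htwk := htw k
    have hκform : ((k : Kp p) + iotaK p (iota p a)) = iotaK p (iota p ((k : ℤ_[p]) + a)) := by
      rw [map_add, map_add, map_natCast, map_natCast]
    have hκne : ((k : Kp p) + iotaK p (iota p a)) ≠ 0 := by
      rw [hκform]
      intro h0
      exact hκZ k (hιinj (hKinj (by simpa using h0)))
    have hIAne : iotaK p (iota p (A k)) ≠ 0 := by
      intro h0
      exact hAne k (hιinj (hKinj (by simpa using h0)))
    have hκtw : ((k : Kp p) + iotaK p (iota p a)) * iotaK p (tw k) = 1 - iotaK p (cw k) := by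
      rw [hκform, ← map_mul, htwk, map_sub, map_one]
    unfold BhatK at hw0k ⊢
    have hargβ : (((k - dl p a) / p : ℕ) : ℤ_[p]) + a' = βf k := rfl
    by_cases hk : (dl p a ≤ k ∧ p ∣ (k - dl p a))
    · rw [if_pos hk] at hw0k ⊢
      rw [hargβ] at hw0k ⊢
      simp only [map_one, mul_one] at hw0k
      have hcwk : cw k = cpw (βf k) := by
        rw [hcwdef]; simp only [if_pos hk]
      rw [hcwk] at hκtw
      set κ : Kp p := ((k : Kp p) + iotaK p (iota p a)) with hκdef
      set IA : Kp p := iotaK p (iota p (A k)) with hIAdef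
      set E : Kp p := (-1 : Kp p) ^ (s * de p a) * iotaK p (iota p (A1 ((k - dl p a) / p)))
        with hEdef
      set γ : Kp p := iotaK p (cpw (βf k)) with hγdef
      have hw0' : κ * iotaK p (w0 k) * IA = IA - E := by
        rw [hw0k]
        field_simp
      have hRHS : iotaK p (cw k * w0 k + tw k) = κ⁻¹ * (IA - E * γ) / IA := by
        apply mul_left_cancel₀ (mul_ne_zero hκne hIAne)
        calc κ * IA * iotaK p (cw k * w0 k + tw k)
            = γ * (κ * iotaK p (w0 k) * IA) + (κ * iotaK p (tw k)) * IA := by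
              rw [map_add, map_mul, hcwk]; ring
          _ = γ * (IA - E) + (1 - γ) * IA := by rw [hw0', hκtw]
          _ = IA - E * γ := by ring
          _ = κ * IA * (κ⁻¹ * (IA - E * γ) / IA) := by
              field_simp
      exact hRHS.symm
    · rw [if_neg hk] at hw0k ⊢
      have hcwk : cw k = 1 := by
        rw [hcwdef]; simp only [if_neg hk]
      have htw0 : tw k = 0 := by
        rw [hcwk, sub_self] at htwk
        exact (mul_eq_zero.mp htwk).resolve_left (hιne _ (hκZ k))
      rw [hcwk, htw0, one_mul, add_zero]
      exact hw0k.symm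
  constructor
  · intro k
    exact RingHom.mem_range.mpr ⟨cw k * w0 k + tw k, (hmain k).symm⟩
  · intro n n' m hdvd
    suffices hW : (p : Wp p) ^ m ∣ (cw n * w0 n + tw n) - (cw n' * w0 n' + tw n') by
      obtain ⟨w, hw⟩ := hW
      refine ⟨w, ?_⟩
      simp only
      rw [hmain n, hmain n', ← map_sub, hw, map_mul, map_pow, map_natCast]
    rcases Nat.eq_zero_or_pos m with rfl | hm
    · simpa using one_dvd _
    have hpdvd1 : (p : ℤ) ∣ (n : ℤ) - (n' : ℤ) :=
      dvd_trans (dvd_pow_self _ (by omega : m ≠ 0)) hdvd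
    have hsame : (dl p a ≤ n ∧ p ∣ (n - dl p a)) ↔ (dl p a ≤ n' ∧ p ∣ (n' - dl p a)) := by
      rw [hχiff n, hχiff n']
      constructor
      · intro h
        have : (n' : ℤ) - (dl p a : ℤ) = ((n : ℤ) - (dl p a : ℤ)) - ((n : ℤ) - (n' : ℤ)) := by
          ring
        rw [this]
        exact dvd_sub h hpdvd1
      · intro h
        have : (n : ℤ) - (dl p a : ℤ) = ((n' : ℤ) - (dl p a : ℤ)) + ((n : ℤ) - (n' : ℤ)) := by
          ring
        rw [this]
        exact dvd_add h hpdvd1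
    have hsplit2 : (cw n * w0 n + tw n) - (cw n' * w0 n' + tw n') =
        cw n * (w0 n - w0 n') + (cw n - cw n') * w0 n' + (tw n - tw n') := by ring
    rw [hsplit2]
    have hβdvd : (dl p a ≤ n ∧ p ∣ (n - dl p a)) → (dl p a ≤ n' ∧ p ∣ (n' - dl p a)) →
        (p : ℤ_[p]) ^ (m - 1) ∣ βf n - βf n' := by
      intro hn hn'
      have h1 := hksplit n hn
      have h2 := hksplit n' hn'
      have hZ1 : ((n : ℕ) : ℤ) = (dl p a : ℤ) + (mkf n : ℤ) * (p : ℤ) := by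
        exact_mod_cast congrArg (Nat.cast : ℕ → ℤ) h1
      have hZ2 : ((n' : ℕ) : ℤ) = (dl p a : ℤ) + (mkf n' : ℤ) * (p : ℤ) := by
        exact_mod_cast congrArg (Nat.cast : ℕ → ℤ) h2
      have hZ : (n : ℤ) - (n' : ℤ) = (p : ℤ) * ((mkf n : ℤ) - (mkf n' : ℤ)) := by
        rw [hZ1, hZ2]; ring
      have hdvd' : (p : ℤ) * (p : ℤ) ^ (m - 1) ∣ (p : ℤ) * ((mkf n : ℤ) - (mkf n' : ℤ)) := by
        rw [← hZ]
        have : (p : ℤ) * (p : ℤ) ^ (m - 1) = (p : ℤ) ^ m := by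
          rw [← pow_succ']
          congr 1
          omega
        rw [this]
        exact hdvd
      have hpZ : (p : ℤ) ≠ 0 := by exact_mod_cast hfp.out.ne_zero
      have hmk : (p : ℤ) ^ (m - 1) ∣ (mkf n : ℤ) - (mkf n' : ℤ) :=
        (mul_dvd_mul_iff_left hpZ).mp hdvd'
      have hβeq : βf n - βf n' = (((mkf n : ℤ) - (mkf n' : ℤ) : ℤ) : ℤ_[p]) := by
        rw [hβf]
        push_cast
        ring
      rw [hβeq]
      have := map_dvd (Int.castRingHom ℤ_[p]) hmk
      simpa using this
    refine dvd_add (dvd_add ?_ ?_) ?_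
    · -- cw n * (w0 n − w0 n')
      obtain ⟨w, hwip⟩ := hlip n n' m hdvd
      have hW0 : w0 n - w0 n' = (p : Wp p) ^ m * w := by
        apply hKinj
        rw [map_sub, hw0, hw0, map_mul, map_pow, map_natCast]
        exact hwip
      rw [hW0]
      exact Dvd.dvd.mul_left (Dvd.dvd.mul_right dvd_rfl w) _
    · -- (cw n − cw n') * w0 n'
      by_cases hn : (dl p a ≤ n ∧ p ∣ (n - dl p a))
      · have hn' := hsame.mp hn
        have hB := bridgeB (1 + e2) (by omega) u' c hcu cpw hcpw (hβdvd hn hn')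
        have hcwe : cw n - cw n' = cpw (βf n) - cpw (βf n') := by
          rw [hcwdef]; simp only [if_pos hn, if_pos hn']
        rw [hcwe]
        exact Dvd.dvd.mul_right (dvd_trans (pow_dvd_pow _ (by omega)) hB) _
      · have hn' := (not_iff_not.mpr hsame).mp hn
        have hcwe : cw n - cw n' = 0 := by
          rw [hcwdef]; simp only [if_neg hn, if_neg hn']; ring
        rw [hcwe, zero_mul]
        exact dvd_zero _
    · -- tw n − tw n'
      by_cases hn : (dl p a ≤ n ∧ p ∣ (n - dl p a))
      · have hn' := hsame.mp hn
        have he1 : (p : Wp p) * iota p (βf n) * tw n = 1 - cpw (βf n) := by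
          have := htw n
          rw [hkβ n hn] at this
          rw [hcwdef] at this
          simp only [if_pos hn] at this
          rw [← this, map_mul, map_natCast]
        have he2' : (p : Wp p) * iota p (βf n') * tw n' = 1 - cpw (βf n') := by
          have := htw n'
          rw [hkβ n' hn'] at this
          rw [hcwdef] at this
          simp only [if_pos hn'] at this
          rw [← this, map_mul, map_natCast]
        obtain ⟨y, hy⟩ := bridgeC (1 + e2) e2 rfl hkeyfac u' c hcu cpw hcpw
          (hβne n hn) (hβne n' hn') (hβdvd hn hn')
        rw [show (m - 1) + 2 + e2 = (m + 1) + e2 by omega] at hy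
        have hBne : iota p (βf n) ≠ 0 := hιne _ (hβne n hn)
        have hBne' : iota p (βf n') ≠ 0 := hιne _ (hβne n' hn')
        have hfacne : ((p : Wp p) * iota p (βf n) * ((p : Wp p) * iota p (βf n'))) ≠ 0 :=
          mul_ne_zero (mul_ne_zero hPne hBne) (mul_ne_zero hPne hBne')
        have hstep : ((p : Wp p) * iota p (βf n) * ((p : Wp p) * iota p (βf n'))) *
            (tw n - tw n') =
            ((p : Wp p) * iota p (βf n) * ((p : Wp p) * iota p (βf n'))) *
            (-((p : Wp p) ^ (m + e2) * y)) := by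
          have hpowsplit : (p : Wp p) ^ ((m + 1) + e2) = (p : Wp p) * (p : Wp p) ^ (m + e2) := by
            rw [← pow_succ']
            congr 1
            omega
          rw [hpowsplit] at hy
          linear_combination ((p : Wp p) * iota p (βf n')) * he1 -
            ((p : Wp p) * iota p (βf n)) * he2' - (p : Wp p) * hy
        have hΔt : tw n - tw n' = -((p : Wp p) ^ (m + e2) * y) :=
          mul_left_cancel₀ hfacne hstep
        rw [hΔt, pow_add]
        exact dvd_neg.mpr ⟨(p : Wp p) ^ e2 * y, by ring⟩
      · have hn' := (not_iff_not.mpr hsame).mp hn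
        have ht0 : ∀ k : ℕ, ¬ (dl p a ≤ k ∧ p ∣ (k - dl p a)) → tw k = 0 := by
          intro k hk
          have := htw k
          rw [hcwdef] at this
          simp only [if_neg hk] at this
          rw [sub_self] at this
          exact (mul_eq_zero.mp this).resolve_left (hιne _ (hκZ k))
        rw [ht0 n hn, ht0 n' hn', sub_self]
        exact dvd_zero _

end HGP
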